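/- Let 𝒞 be an antiunitary operator on ℂⁿ with 𝒞² = ±1, and let f : 𝕋 → GLₙ(ℂ) satisfy f(z) = 𝒞 f(z̄)* 𝒞* for all z ∈ 𝕋 and admit a canonical factorization. Then the canonical extension fᵉ : 𝔻² → GLₙ(ℂ) satisfies fᵉ(z) = 𝒞 fᵉ(z̄)* 𝒞* for all z ∈ 𝔻². -/

import Mathlib

open Metric

/-- A canonical (right) factorization `f = f₋ f₊` of a nonsingular matrix function on the
unit circle.  The factor `f₊` extends continuously and invertibly to the closed unit disk,
analytically on the open disk; the factor `f₋` extends continuously and invertibly to the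
closed exterior disk including `∞`.  We encode the exterior extension `f₋ᵉ` via the map
`Fm : 𝔻² → GLₙ(ℂ)`, `Fm w = f₋ᵉ(w⁻¹)` (so `Fm 0 = f₋ᵉ(∞)`), which is continuous on the
closed unit disk, analytic on the open disk, and invertible-valued. -/
structure CanonicalFactorization (n : ℕ) (f : ℂ → Matrix (Fin n) (Fin n) ℂ) : Type where
  Fm : ℂ → Matrix (Fin n) (Fin n) ℂ
  Fp : ℂ → Matrix (Fin n) (Fin n) ℂ
  contOn_m : ContinuousOn Fm (closedBall 0 1)
  contOn_p : ContinuousOn Fp (closedBall 0 1)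
  anal_m : ∀ i j, DifferentiableOn ℂ (fun z => Fm z i j) (ball 0 1)
  anal_p : ∀ i j, DifferentiableOn ℂ (fun z => Fp z i j) (ball 0 1)
  unit_m : ∀ z ∈ closedBall (0 : ℂ) 1, IsUnit (Fm z)
  unit_p : ∀ z ∈ closedBall (0 : ℂ) 1, IsUnit (Fp z)
  factor : ∀ z ∈ sphere (0 : ℂ) 1, f z = Fm z⁻¹ * Fp z


open Metric Complex intervalIntegral Filter


private lemma exp_neg_conj (θ : ℝ) :
    (starRingEnd ℂ) (Complex.exp (θ * Complex.I)) = Complex.exp (-(θ:ℂ) * Complex.I) := by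
  rw [← Complex.exp_conj]
  congr 1
  simp [Complex.conj_I]

private lemma exp_neg_conj' (θ : ℝ) :
    (starRingEnd ℂ) (Complex.exp (-(θ:ℂ) * Complex.I)) = Complex.exp ((θ:ℂ) * Complex.I) := by
  rw [← Complex.exp_conj]
  congr 1
  simp [Complex.conj_I]

private lemma exp_periodic' : Function.Periodic (fun θ : ℝ => Complex.exp (θ * Complex.I)) (2 * Real.pi) := by
  intro θ
  simp only
  push_cast
  rw [add_mul, Complex.exp_add, Complex.exp_two_pi_mul_I, mul_one]

private lemma inner_const {h k : ℂ → ℂ}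
    (hhc : ContinuousOn h (closedBall 0 1)) (hhd : DifferentiableOn ℂ h (ball 0 1))
    (hkc : ContinuousOn k (closedBall 0 1)) (hkd : DifferentiableOn ℂ k (ball 0 1))
    (rel : ∀ z ∈ sphere (0 : ℂ) 1, k z = h (starRingEnd ℂ z)) :
    ∀ w ∈ ball (0 : ℂ) 1, k w = k 0 := by
  intro w hw
  have hwn : ‖w‖ < 1 := by simpa [mem_ball] using hw
  have h0 : (0 : ℂ) ∈ ball (0 : ℂ) 1 := by simp
  have hkd' : ∀ x ∈ ball (0 : ℂ) 1 \ (∅ : Set ℂ), DifferentiableAt ℂ k x := fun x hx =>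
    hkd.differentiableAt (isOpen_ball.mem_nhds hx.1)
  have hne : ∀ z ∈ sphere (0 : ℂ) 1, z - w ≠ 0 := by
    intro z hz
    have hz1 : ‖z‖ = 1 := by simpa [mem_sphere_zero_iff_norm] using hz
    intro hzw
    rw [sub_eq_zero] at hzw
    rw [hzw] at hz1
    exact absurd hz1 (ne_of_lt hwn)
  have hne0 : ∀ z ∈ sphere (0 : ℂ) 1, z ≠ 0 := by
    intro z hz
    have hz1 : ‖z‖ = 1 := by simpa [mem_sphere_zero_iff_norm] using hz
    intro h0'; rw [h0'] at hz1; simp at hz1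
  have hball : ∀ z ∈ closedBall (0 : ℂ) 1, 1 - w * z ≠ 0 := by
    intro z hz
    have hz1 : ‖z‖ ≤ 1 := by simpa [mem_closedBall, dist_zero_right] using hz
    intro hcon
    rw [sub_eq_zero] at hcon
    have : ‖w * z‖ < 1 := by
      rw [norm_mul]
      calc ‖w‖ * ‖z‖ ≤ ‖w‖ * 1 := by
            exact mul_le_mul_of_nonneg_left hz1 (norm_nonneg _)
        _ = ‖w‖ := mul_one _
        _ < 1 := hwn
    rw [← hcon] at this
    simp at this
  -- Cauchy integral formulas
  have cw := Complex.circleIntegral_sub_inv_smul_of_differentiable_on_off_countable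
      Set.countable_empty hw hkc hkd'
  have c0 := Complex.circleIntegral_sub_inv_smul_of_differentiable_on_off_countable
      Set.countable_empty h0 hkc hkd'
  have i1 : CircleIntegrable (fun z => (z - w)⁻¹ • k z) 0 1 :=
    (((continuousOn_id.sub continuousOn_const).inv₀ hne).smul
      (hkc.mono sphere_subset_closedBall)).circleIntegrable zero_le_one
  have i0 : CircleIntegrable (fun z => (z - 0)⁻¹ • k z) 0 1 :=
    (((continuousOn_id.sub continuousOn_const).inv₀ (by simpa using hne0)).smul
      (hkc.mono sphere_subset_closedBall)).circleIntegrable zero_le_one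
  have Idiff : (∮ z in C(0, 1), ((z - w)⁻¹ - z⁻¹) * k z)
      = (2 * Real.pi * Complex.I) * (k w - k 0) := by
    have e1 : (fun z : ℂ => ((z - w)⁻¹ - z⁻¹) * k z)
        = fun z => (z - w)⁻¹ • k z - (z - 0)⁻¹ • k z := by
      funext z; simp [sub_mul, smul_eq_mul]
    rw [e1, circleIntegral.integral_sub i1 i0, cw, c0]
    simp only [smul_eq_mul]
    ring
  -- substitute boundary values
  have Isub : (∮ z in C(0, 1), ((z - w)⁻¹ - z⁻¹) * k z)
      = ∮ z in C(0, 1), ((z - w)⁻¹ - z⁻¹) * h (starRingEnd ℂ z) := by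
    apply circleIntegral.integral_congr zero_le_one
    intro z hz
    simp only
    rw [rel z hz]
  -- the reflected integral
  set g : ℝ → ℂ := fun θ =>
    (starRingEnd ℂ (Complex.exp (θ * Complex.I)) * Complex.I) *
      ((starRingEnd ℂ (Complex.exp (θ * Complex.I)) - w)⁻¹ -
        (starRingEnd ℂ (Complex.exp (θ * Complex.I)))⁻¹) * h (Complex.exp (θ * Complex.I)) with hg
  have per : Function.Periodic g (2 * Real.pi) := by
    intro θ
    simp only [hg, exp_periodic' θ]
  have Irefl : (∮ z in C(0, 1), ((z - w)⁻¹ - z⁻¹) * h (starRingEnd ℂ z))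
      = ∫ θ in (0:ℝ)..(2 * Real.pi), g (-θ) := by
    simp only [circleIntegral, deriv_circleMap, smul_eq_mul]
    apply intervalIntegral.integral_congr
    intro θ _
    have e1 : circleMap 0 1 θ = Complex.exp (θ * Complex.I) := by simp [circleMap]
    simp only [hg, e1]
    push_cast
    rw [exp_neg_conj θ, exp_neg_conj' θ]
    ring
  have Ineg : (∫ θ in (0:ℝ)..(2 * Real.pi), g (-θ)) = ∫ θ in (0:ℝ)..(2 * Real.pi), g θ := by
    rw [intervalIntegral.integral_comp_neg]
    have := per.intervalIntegral_add_eq (-(2 * Real.pi)) 0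
    simpa using this
  have Ifin : (∫ θ in (0:ℝ)..(2 * Real.pi), g θ)
      = ∮ z in C(0, 1), (w * (1 - w * z)⁻¹) * h z := by
    rw [circleIntegral]
    apply intervalIntegral.integral_congr
    intro θ _
    have e1 : circleMap 0 1 θ = Complex.exp (θ * Complex.I) := by simp [circleMap]
    simp only [hg, e1, deriv_circleMap, smul_eq_mul]
    set v := Complex.exp ((θ:ℂ) * Complex.I) with hv
    have hv0 : v ≠ 0 := Complex.exp_ne_zero _
    have hv1 : ‖v‖ = 1 := by
      rw [hv, Complex.norm_exp_ofReal_mul_I]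
    have hconj : starRingEnd ℂ v = v⁻¹ := by
      rw [hv, exp_neg_conj θ, ← Complex.exp_neg]
      congr 1; ring
    have h2 : v⁻¹ - w ≠ 0 := by
      rw [sub_ne_zero]
      intro hcon
      rw [← hcon] at hwn
      simp [norm_inv, hv1] at hwn
    have h1 : 1 - w * v ≠ 0 := hball v (mem_closedBall_zero_iff.2 hv1.le)
    have h1' : 1 - v * w ≠ 0 := by rw [mul_comm]; exact h1
    rw [hconj]
    field_simp
    ring
  have zero : (∮ z in C(0, 1), (w * (1 - w * z)⁻¹) * h z) = 0 := by
    apply circleIntegral_eq_zero_of_differentiable_on_off_countable zero_le_one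
      Set.countable_empty
    · exact (continuousOn_const.mul ((continuousOn_const.sub
        (continuousOn_const.mul continuousOn_id)).inv₀ hball)).mul hhc
    · intro z hz
      have h1 := hball z (ball_subset_closedBall hz.1)
      have h2 := hhd.differentiableAt (isOpen_ball.mem_nhds hz.1)
      fun_prop (disch := assumption)
  have final : (2 * Real.pi * Complex.I) * (k w - k 0) = 0 := by
    rw [← Idiff, Isub, Irefl, Ineg, Ifin, zero]
  have h2pi : (2 * (Real.pi:ℂ) * Complex.I) ≠ 0 := by
    simp [Real.pi_ne_zero, Complex.I_ne_zero]
  have := mul_eq_zero.1 final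
  rcases this with hc | hc
  · exact absurd hc h2pi
  · exact sub_eq_zero.1 hc

private lemma const_closure {g : ℂ → ℂ} (hg : ContinuousOn g (closedBall 0 1))
    (hc : ∀ w ∈ ball (0 : ℂ) 1, g w = g 0) :
    ∀ w ∈ closedBall (0 : ℂ) 1, g w = g 0 := by
  intro w hw
  have hwc : w ∈ closure (ball (0 : ℂ) 1) := by
    rw [closure_ball (0 : ℂ) one_ne_zero]; exact hw
  have hne : (nhdsWithin w (ball (0 : ℂ) 1)).NeBot :=
    mem_closure_iff_nhdsWithin_neBot.1 hwc
  have t1 : Filter.Tendsto g (nhdsWithin w (ball (0 : ℂ) 1)) (nhds (g w)) :=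
    ((hg w hw).mono ball_subset_closedBall)
  have t2 : Filter.Tendsto g (nhdsWithin w (ball (0 : ℂ) 1)) (nhds (g 0)) := by
    apply Filter.Tendsto.congr' _ tendsto_const_nhds
    filter_upwards [self_mem_nhdsWithin] with x hx
    exact (hc x hx).symm
  exact tendsto_nhds_unique t1 t2

private lemma scalar_core {h k : ℂ → ℂ}
    (hhc : ContinuousOn h (closedBall 0 1)) (hhd : DifferentiableOn ℂ h (ball 0 1))
    (hkc : ContinuousOn k (closedBall 0 1)) (hkd : DifferentiableOn ℂ k (ball 0 1))
    (rel : ∀ z ∈ sphere (0 : ℂ) 1, h z = k (starRingEnd ℂ z)) :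
    ∀ z ∈ closedBall (0 : ℂ) 1, ∀ w ∈ closedBall (0 : ℂ) 1, h z = k w := by
  have conj_sphere : ∀ z : ℂ, z ∈ sphere (0 : ℂ) 1 → starRingEnd ℂ z ∈ sphere (0 : ℂ) 1 := by
    intro z hz
    have hz1 : ‖z‖ = 1 := by simpa [mem_sphere_zero_iff_norm] using hz
    rw [mem_sphere_zero_iff_norm]
    simpa using hz1
  have rel' : ∀ z ∈ sphere (0 : ℂ) 1, k z = h (starRingEnd ℂ z) := by
    intro z hz
    have := rel (starRingEnd ℂ z) (conj_sphere z hz)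
    simpa [Complex.conj_conj] using this.symm
  have kconst : ∀ w ∈ closedBall (0 : ℂ) 1, k w = k 0 :=
    const_closure hkc (inner_const hhc hhd hkc hkd rel')
  have hconst : ∀ w ∈ closedBall (0 : ℂ) 1, h w = h 0 :=
    const_closure hhc (inner_const hkc hkd hhc hhd rel)
  have h1s : (1 : ℂ) ∈ sphere (0 : ℂ) 1 := by simp [mem_sphere_zero_iff_norm]
  have h1cb : (1 : ℂ) ∈ closedBall (0 : ℂ) 1 := sphere_subset_closedBall h1s
  have heq : h 0 = k 0 := by
    have := rel 1 h1s
    simp only [map_one] at this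
    rw [← hconst 1 h1cb, ← kconst 1 h1cb]
    exact this
  intro z hz w hw
  rw [hconst z hz, kconst w hw, heq]

section MatrixReg

variable {n : ℕ} {s : Set ℂ}

private lemma entryDiff_mul {g h : ℂ → Matrix (Fin n) (Fin n) ℂ}
    (hg : ∀ i j, DifferentiableOn ℂ (fun z => g z i j) s)
    (hh : ∀ i j, DifferentiableOn ℂ (fun z => h z i j) s) :
    ∀ i j, DifferentiableOn ℂ (fun z => (g z * h z) i j) s := by
  intro i j
  simp only [Matrix.mul_apply]
  exact DifferentiableOn.fun_sum fun x _ => (hg i x).fun_mul (hh x j)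

private lemma entryCont_mul {g h : ℂ → Matrix (Fin n) (Fin n) ℂ}
    (hg : ∀ i j, ContinuousOn (fun z => g z i j) s)
    (hh : ∀ i j, ContinuousOn (fun z => h z i j) s) :
    ∀ i j, ContinuousOn (fun z => (g z * h z) i j) s := by
  intro i j
  simp only [Matrix.mul_apply]
  exact continuousOn_finset_sum _ fun x _ => (hg i x).mul (hh x j)

private lemma entryDiff_det {g : ℂ → Matrix (Fin n) (Fin n) ℂ}
    (hg : ∀ i j, DifferentiableOn ℂ (fun z => g z i j) s) :
    DifferentiableOn ℂ (fun z => (g z).det) s := by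
  simp only [Matrix.det_apply']
  exact DifferentiableOn.fun_sum fun σ _ =>
    (differentiableOn_const _).fun_mul (DifferentiableOn.fun_finset_prod fun i _ => hg (σ i) i)

private lemma entryCont_det {g : ℂ → Matrix (Fin n) (Fin n) ℂ}
    (hg : ∀ i j, ContinuousOn (fun z => g z i j) s) :
    ContinuousOn (fun z => (g z).det) s := by
  simp only [Matrix.det_apply']
  exact continuousOn_finset_sum _ fun σ _ =>
    continuousOn_const.mul (continuousOn_finset_prod _ fun i _ => hg (σ i) i)

private lemma entryDiff_adjugate {g : ℂ → Matrix (Fin n) (Fin n) ℂ}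
    (hg : ∀ i j, DifferentiableOn ℂ (fun z => g z i j) s) :
    ∀ i j, DifferentiableOn ℂ (fun z => (g z).adjugate i j) s := by
  intro i j
  simp only [Matrix.adjugate_apply]
  apply entryDiff_det
  intro a b
  by_cases hab : a = j
  · simp only [Matrix.updateRow_apply, hab, if_pos rfl]
    exact differentiableOn_const _
  · simp only [Matrix.updateRow_apply, if_neg hab]
    exact hg a b

private lemma entryCont_adjugate {g : ℂ → Matrix (Fin n) (Fin n) ℂ}
    (hg : ∀ i j, ContinuousOn (fun z => g z i j) s) :
    ∀ i j, ContinuousOn (fun z => (g z).adjugate i j) s := by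
  intro i j
  simp only [Matrix.adjugate_apply]
  apply entryCont_det
  intro a b
  by_cases hab : a = j
  · simp only [Matrix.updateRow_apply, hab, if_pos rfl]
    exact continuousOn_const
  · simp only [Matrix.updateRow_apply, if_neg hab]
    exact hg a b

private lemma det_ne_zero_of_isUnit {A : Matrix (Fin n) (Fin n) ℂ} (h : IsUnit A) :
    A.det ≠ 0 :=
  ((Matrix.isUnit_iff_isUnit_det A).1 h).ne_zero

private lemma entryDiff_inv {g : ℂ → Matrix (Fin n) (Fin n) ℂ}
    (hg : ∀ i j, DifferentiableOn ℂ (fun z => g z i j) s)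
    (hu : ∀ z ∈ s, IsUnit (g z)) :
    ∀ i j, DifferentiableOn ℂ (fun z => (g z)⁻¹ i j) s := by
  intro i j
  simp only [Matrix.inv_def, Ring.inverse_eq_inv', Matrix.smul_apply, smul_eq_mul]
  exact ((entryDiff_det hg).inv fun z hz => det_ne_zero_of_isUnit (hu z hz)).mul
    (entryDiff_adjugate hg i j)

private lemma entryCont_inv {g : ℂ → Matrix (Fin n) (Fin n) ℂ}
    (hg : ∀ i j, ContinuousOn (fun z => g z i j) s)
    (hu : ∀ z ∈ s, IsUnit (g z)) :
    ∀ i j, ContinuousOn (fun z => (g z)⁻¹ i j) s := by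
  intro i j
  simp only [Matrix.inv_def, Ring.inverse_eq_inv', Matrix.smul_apply, smul_eq_mul]
  exact (((entryCont_det hg)).inv₀ fun z hz => det_ne_zero_of_isUnit (hu z hz)).mul
    (entryCont_adjugate hg i j)

end MatrixReg


open Matrix in
/-- Let `𝒞` be an antiunitary operator on `ℂⁿ` with `𝒞² = ±1`, written `𝒞 v = C (conj v)`
with `C` unitary, so `𝒞 x* 𝒞* = C ((x*)̄) C* = C xᵀ C*`; we keep the form
`C ((xᴴ).map conj) Cᴴ`.  If `f : 𝕋 → GLₙ(ℂ)` satisfies `f(z) = 𝒞 f(z̄)* 𝒞*` and admits a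
canonical factorization, then its canonical extension `fᵉ(z) = f₋ᵉ(z̄⁻¹) f₊ᵉ(z)` satisfies
`fᵉ(z) = 𝒞 fᵉ(z̄)* 𝒞*` for all `z` in the closed unit disk. -/
theorem extension_transpose_equivariant {n : ℕ} (f : ℂ → Matrix (Fin n) (Fin n) ℂ)
    (c : CanonicalFactorization n f)
    (C : Matrix (Fin n) (Fin n) ℂ) (hC : Cᴴ * C = 1 ∧ C * Cᴴ = 1)
    (ε : ℂ) (hε : ε = 1 ∨ ε = -1)
    (hC2 : C * C.map (starRingEnd ℂ) = ε • (1 : Matrix (Fin n) (Fin n) ℂ))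
    (hf : ∀ z ∈ sphere (0 : ℂ) 1,
      f z = C * ((f (starRingEnd ℂ z))ᴴ).map (starRingEnd ℂ) * Cᴴ) :
    ∀ z ∈ closedBall (0 : ℂ) 1,
      c.Fm (starRingEnd ℂ z) * c.Fp z =
        C * (((c.Fm z * c.Fp (starRingEnd ℂ z))ᴴ).map (starRingEnd ℂ)) * Cᴴ := by
  -- preliminaries
  intro z hz
  have tmap : ∀ X : Matrix (Fin n) (Fin n) ℂ, (Xᴴ).map (starRingEnd ℂ) = Xᵀ := by
    intro X
    ext i j
    simp [Matrix.map_apply, Matrix.conjTranspose_apply, Matrix.transpose_apply]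
  have hCdet : IsUnit C.det :=
    IsUnit.of_mul_eq_one Cᴴ.det (by rw [← Matrix.det_mul, hC.2, Matrix.det_one])
  have hCHdet : IsUnit Cᴴ.det :=
    IsUnit.of_mul_eq_one C.det (by rw [← Matrix.det_mul, hC.1, Matrix.det_one])
  set P : ℂ → Matrix (Fin n) (Fin n) ℂ := fun z => C * (c.Fp z)ᵀ * Cᴴ with hP
  set Q : ℂ → Matrix (Fin n) (Fin n) ℂ := fun z => C * (c.Fm z)ᵀ * Cᴴ with hQ
  have hPunit : ∀ w ∈ closedBall (0 : ℂ) 1, IsUnit (P w) := by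
    intro w hw
    rw [Matrix.isUnit_iff_isUnit_det, hP]
    simp only
    rw [Matrix.det_mul, Matrix.det_mul, Matrix.det_transpose]
    exact (hCdet.mul ((Matrix.isUnit_iff_isUnit_det _).1 (c.unit_p w hw))).mul hCHdet
  have hQunit : ∀ w ∈ closedBall (0 : ℂ) 1, IsUnit (Q w) := by
    intro w hw
    rw [Matrix.isUnit_iff_isUnit_det, hQ]
    simp only
    rw [Matrix.det_mul, Matrix.det_mul, Matrix.det_transpose]
    exact (hCdet.mul ((Matrix.isUnit_iff_isUnit_det _).1 (c.unit_m w hw))).mul hCHdet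
  have conj_cb : ∀ w : ℂ, w ∈ closedBall (0 : ℂ) 1 → starRingEnd ℂ w ∈ closedBall (0 : ℂ) 1 := by
    intro w hw
    rw [mem_closedBall_zero_iff] at hw ⊢
    simpa using hw
  have conj_sph : ∀ w : ℂ, w ∈ sphere (0 : ℂ) 1 → starRingEnd ℂ w ∈ sphere (0 : ℂ) 1 := by
    intro w hw
    rw [mem_sphere_zero_iff_norm] at hw ⊢
    simpa using hw
  have conj_inv : ∀ w : ℂ, w ∈ sphere (0 : ℂ) 1 → w⁻¹ = starRingEnd ℂ w := by
    intro w hw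
    have habs : ‖w‖ = 1 := by
      rwa [← mem_sphere_zero_iff_norm]
    rw [Complex.inv_def, Complex.normSq_eq_norm_sq, habs]
    simp
  -- the key boundary identity
  have key : ∀ w ∈ sphere (0 : ℂ) 1,
      c.Fm (starRingEnd ℂ w) * c.Fp w = P (starRingEnd ℂ w) * Q w := by
    intro w hw
    have hwc : starRingEnd ℂ w ∈ sphere (0 : ℂ) 1 := conj_sph w hw
    have e1 : c.Fm (starRingEnd ℂ w) * c.Fp w = f w := by
      rw [c.factor w hw, conj_inv w hw]
    have e2 : f (starRingEnd ℂ w) = c.Fm w * c.Fp (starRingEnd ℂ w) := by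
      rw [c.factor _ hwc, conj_inv _ hwc]
      simp
    have e3 : f w = C * (c.Fp (starRingEnd ℂ w))ᵀ * ((c.Fm w)ᵀ * Cᴴ) := by
      rw [hf w hw, e2, tmap, Matrix.transpose_mul]
      simp only [Matrix.mul_assoc]
    rw [e1, e3, hP, hQ]
    simp only
    symm
    calc C * (c.Fp (starRingEnd ℂ w))ᵀ * Cᴴ * (C * (c.Fm w)ᵀ * Cᴴ)
        = C * (c.Fp (starRingEnd ℂ w))ᵀ * (Cᴴ * C * ((c.Fm w)ᵀ * Cᴴ)) := by
          simp only [Matrix.mul_assoc]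
      _ = C * (c.Fp (starRingEnd ℂ w))ᵀ * ((c.Fm w)ᵀ * Cᴴ) := by
          rw [hC.1, Matrix.one_mul]
  -- the two comparison functions
  set H : ℂ → Matrix (Fin n) (Fin n) ℂ := fun z => Q z * (c.Fp z)⁻¹ with hH
  set K : ℂ → Matrix (Fin n) (Fin n) ℂ := fun z => (P z)⁻¹ * c.Fm z with hK
  have relHK : ∀ w ∈ sphere (0 : ℂ) 1, H w = K (starRingEnd ℂ w) := by
    intro w hw
    have hwcb : w ∈ closedBall (0 : ℂ) 1 := sphere_subset_closedBall hw
    have hwc : starRingEnd ℂ w ∈ closedBall (0 : ℂ) 1 := conj_cb w hwcb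
    have hFp : IsUnit (c.Fp w).det := (Matrix.isUnit_iff_isUnit_det _).1 (c.unit_p w hwcb)
    have hPd : IsUnit (P (starRingEnd ℂ w)).det :=
      (Matrix.isUnit_iff_isUnit_det _).1 (hPunit _ hwc)
    have step : c.Fm (starRingEnd ℂ w) = P (starRingEnd ℂ w) * Q w * (c.Fp w)⁻¹ := by
      have := key w hw
      calc c.Fm (starRingEnd ℂ w)
          = c.Fm (starRingEnd ℂ w) * (c.Fp w * (c.Fp w)⁻¹) := by
            rw [Matrix.mul_nonsing_inv _ hFp, Matrix.mul_one]
        _ = c.Fm (starRingEnd ℂ w) * c.Fp w * (c.Fp w)⁻¹ := by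
            rw [Matrix.mul_assoc]
        _ = P (starRingEnd ℂ w) * Q w * (c.Fp w)⁻¹ := by rw [this]
    rw [hH, hK]
    simp only
    rw [step]
    symm
    calc (P (starRingEnd ℂ w))⁻¹ * (P (starRingEnd ℂ w) * Q w * (c.Fp w)⁻¹)
        = (P (starRingEnd ℂ w))⁻¹ * P (starRingEnd ℂ w) * (Q w * (c.Fp w)⁻¹) := by
          simp only [Matrix.mul_assoc]
      _ = Q w * (c.Fp w)⁻¹ := by rw [Matrix.nonsing_inv_mul _ hPd, Matrix.one_mul]
  -- entrywise regularity
  have entC : ∀ (i j : Fin n), ContinuousOn (fun z => C i j : ℂ → ℂ) (closedBall 0 1) :=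
    fun _ _ => continuousOn_const
  have FmC : ∀ i j, ContinuousOn (fun z => c.Fm z i j) (closedBall 0 1) := fun i j =>
    (continuous_id.matrix_elem i j).comp_continuousOn c.contOn_m
  have FpC : ∀ i j, ContinuousOn (fun z => c.Fp z i j) (closedBall 0 1) := fun i j =>
    (continuous_id.matrix_elem i j).comp_continuousOn c.contOn_p
  have PC : ∀ i j, ContinuousOn (fun z => P z i j) (closedBall 0 1) :=
    entryCont_mul (entryCont_mul (fun _ _ => continuousOn_const)
      (fun i j => FpC j i)) (fun _ _ => continuousOn_const)
  have QC : ∀ i j, ContinuousOn (fun z => Q z i j) (closedBall 0 1) :=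
    entryCont_mul (entryCont_mul (fun _ _ => continuousOn_const)
      (fun i j => FmC j i)) (fun _ _ => continuousOn_const)
  have PD : ∀ i j, DifferentiableOn ℂ (fun z => P z i j) (ball 0 1) :=
    entryDiff_mul (entryDiff_mul (fun _ _ => differentiableOn_const _)
      (fun i j => c.anal_p j i)) (fun _ _ => differentiableOn_const _)
  have QD : ∀ i j, DifferentiableOn ℂ (fun z => Q z i j) (ball 0 1) :=
    entryDiff_mul (entryDiff_mul (fun _ _ => differentiableOn_const _)
      (fun i j => c.anal_m j i)) (fun _ _ => differentiableOn_const _)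
  have FmD : ∀ i j, DifferentiableOn ℂ (fun z => c.Fm z i j) (ball 0 1) := c.anal_m
  have FpD : ∀ i j, DifferentiableOn ℂ (fun z => c.Fp z i j) (ball 0 1) := c.anal_p
  have HC : ∀ i j, ContinuousOn (fun z => H z i j) (closedBall 0 1) :=
    entryCont_mul QC (entryCont_inv FpC c.unit_p)
  have KC : ∀ i j, ContinuousOn (fun z => K z i j) (closedBall 0 1) :=
    entryCont_mul (entryCont_inv PC hPunit) FmC
  have HD : ∀ i j, DifferentiableOn ℂ (fun z => H z i j) (ball 0 1) :=
    entryDiff_mul QD (entryDiff_inv FpD fun w hw => c.unit_p w (ball_subset_closedBall hw))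
  have KD : ∀ i j, DifferentiableOn ℂ (fun z => K z i j) (ball 0 1) :=
    entryDiff_mul (entryDiff_inv PD fun w hw => hPunit w (ball_subset_closedBall hw)) FmD
  -- entrywise Liouville argument
  have Hconst : ∀ z₁ ∈ closedBall (0 : ℂ) 1, ∀ w₁ ∈ closedBall (0 : ℂ) 1, H z₁ = K w₁ := by
    intro z₁ hz₁ w₁ hw₁
    ext i j
    have rel : ∀ w ∈ sphere (0 : ℂ) 1, H w i j = K (starRingEnd ℂ w) i j := by
      intro w hw
      rw [relHK w hw]
    exact scalar_core (HC i j) (HD i j) (KC i j) (KD i j) rel z₁ hz₁ w₁ hw₁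
  -- conclusion
  have hzc : starRingEnd ℂ z ∈ closedBall (0 : ℂ) 1 := conj_cb z hz
  have hFp : IsUnit (c.Fp z).det := (Matrix.isUnit_iff_isUnit_det _).1 (c.unit_p z hz)
  have hPd : IsUnit (P (starRingEnd ℂ z)).det :=
    (Matrix.isUnit_iff_isUnit_det _).1 (hPunit _ hzc)
  have hQz : Q z = H z * c.Fp z := by
    rw [hH]
    simp only
    rw [Matrix.mul_assoc, Matrix.nonsing_inv_mul _ hFp, Matrix.mul_one]
  have hmain : c.Fm (starRingEnd ℂ z) * c.Fp z = P (starRingEnd ℂ z) * Q z := by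
    rw [hQz, Hconst z hz (starRingEnd ℂ z) hzc, hK]
    simp only
    calc c.Fm (starRingEnd ℂ z) * c.Fp z
        = P (starRingEnd ℂ z) * ((P (starRingEnd ℂ z))⁻¹ * c.Fm (starRingEnd ℂ z)) * c.Fp z := by
          rw [← Matrix.mul_assoc, Matrix.mul_nonsing_inv _ hPd, Matrix.one_mul]
      _ = P (starRingEnd ℂ z) * ((P (starRingEnd ℂ z))⁻¹ * c.Fm (starRingEnd ℂ z) * c.Fp z) := by
          simp only [Matrix.mul_assoc]
  rw [hmain, tmap, Matrix.transpose_mul, hP, hQ]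
  simp only
  calc C * (c.Fp (starRingEnd ℂ z))ᵀ * Cᴴ * (C * (c.Fm z)ᵀ * Cᴴ)
      = C * (c.Fp (starRingEnd ℂ z))ᵀ * (Cᴴ * C * ((c.Fm z)ᵀ * Cᴴ)) := by
        simp only [Matrix.mul_assoc]
    _ = C * ((c.Fp (starRingEnd ℂ z))ᵀ * ((c.Fm z)ᵀ * Cᴴ)) := by
        rw [hC.1, Matrix.one_mul, Matrix.mul_assoc]
    _ = C * ((c.Fp (starRingEnd ℂ z))ᵀ * (c.Fm z)ᵀ) * Cᴴ := by
        simp only [Matrix.mul_assoc]
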